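/- Let A be an associative unital ring, J₊ ⊆ A a left ideal, J₋ ⊆ A a right ideal, and ℘ ∈ A an element satisfying ℘² = ℘, 1 − ℘ ∈ J₊ ∩ J₋, x℘ = 0 for every x ∈ J₊, and ℘y = 0 for every y ∈ J₋. Then A decomposes as an internal direct sum of additive groups A = (J₋ + J₊) ⊕ ℘A℘, i.e. (J₋ + J₊) ∩ ℘A℘ = {0} and (J₋ + J₊) + ℘A℘ = A; consequently the quotient map induces an additive-group isomorphism ℘A℘ ≅ A/(J₋ + J₊). -/

import Mathlib

/-- Let `A` be an associative unital ring, `J₊ ⊆ A` a left ideal and `J₋ ⊆ A` a right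
ideal (formalized as additive subgroups with `A * J₊ ⊆ J₊` and `J₋ * A ⊆ J₋`), and
`℘ ∈ A` an element with `℘² = ℘`, `1 - ℘ ∈ J₊ ∩ J₋`, `x ℘ = 0` for all `x ∈ J₊`,
and `℘ y = 0` for all `y ∈ J₋`.  Then `A = (J₋ + J₊) ⊕ ℘A℘` as additive groups:
`(J₋ + J₊) ∩ ℘A℘ = {0}` and `(J₋ + J₊) + ℘A℘ = A`; consequently the quotient map
induces an additive-group isomorphism `℘A℘ ≅ A/(J₋ + J₊)` (the restriction of the
quotient map to `℘A℘` is bijective). -/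
theorem extremal_projector_double_coset_decomposition
    (A : Type*) [Ring A] (Jplus Jminus : AddSubgroup A)
    (hleft : ∀ a : A, ∀ x ∈ Jplus, a * x ∈ Jplus)
    (hright : ∀ y ∈ Jminus, ∀ a : A, y * a ∈ Jminus)
    (p : A) (hidem : p * p = p)
    (honep : (1 : A) - p ∈ Jplus) (honem : (1 : A) - p ∈ Jminus)
    (hannp : ∀ x ∈ Jplus, x * p = 0) (hannm : ∀ y ∈ Jminus, p * y = 0) :
    (∀ z ∈ Jminus ⊔ Jplus, (∃ a : A, z = p * a * p) → z = 0) ∧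
    (∀ a : A, ∃ z ∈ Jminus ⊔ Jplus, ∃ b : A, a = z + p * b * p) ∧
    Function.Bijective
      (fun y : {y : A // ∃ a : A, y = p * a * p} =>
        (QuotientAddGroup.mk y.val : A ⧸ (Jminus ⊔ Jplus))) := by
  have h1 : ∀ z ∈ Jminus ⊔ Jplus, (∃ a : A, z = p * a * p) → z = 0 := by
    rintro z hz ⟨a, rfl⟩
    rcases AddSubgroup.mem_sup.mp hz with ⟨y, hy, x, hx, hyx⟩
    calc p * a * p = p * (p * a * p) * p := by
          rw [show p * (p * a * p) * p = (p * p) * a * (p * p) by noncomm_ring, hidem]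
      _ = p * (y + x) * p := by rw [hyx]
      _ = (p * y) * p + p * (x * p) := by noncomm_ring
      _ = 0 := by rw [hannm y hy, hannp x hx, mul_zero, zero_mul, add_zero]
  have h2 : ∀ a : A, ∃ z ∈ Jminus ⊔ Jplus, ∃ b : A, a = z + p * b * p := by
    intro a
    refine ⟨a - p * a * p, ?_, a, by noncomm_ring⟩
    have hm : (1 - p) * a ∈ Jminus := hright _ honem a
    have hp : (p * a) * (1 - p) ∈ Jplus := hleft _ _ honep
    have : a - p * a * p = (1 - p) * a + (p * a) * (1 - p) := by noncomm_ring
    rw [this]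
    exact AddSubgroup.add_mem _ (AddSubgroup.mem_sup_left hm)
      (AddSubgroup.mem_sup_right hp)
  refine ⟨h1, h2, ?_, ?_⟩
  · rintro ⟨y₁, a₁, rfl⟩ ⟨y₂, a₂, rfl⟩ h
    have hmem : -(p * a₁ * p) + p * a₂ * p ∈ Jminus ⊔ Jplus :=
      (QuotientAddGroup.eq ..).mp h
    have : -(p * a₁ * p) + p * a₂ * p = p * (a₂ - a₁) * p := by noncomm_ring
    rw [this] at hmem
    have := h1 _ hmem ⟨a₂ - a₁, rfl⟩
    have heq : p * a₁ * p = p * a₂ * p := by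
      have hsub : p * a₂ * p - p * a₁ * p = 0 := by
        rw [show p * a₂ * p - p * a₁ * p = p * (a₂ - a₁) * p by noncomm_ring, this]
      exact (sub_eq_zero.mp hsub).symm
    exact Subtype.ext heq
  · intro q
    induction q using QuotientAddGroup.induction_on with
    | H a =>
      obtain ⟨z, hz, b, hab⟩ := h2 a
      refine ⟨⟨p * b * p, b, rfl⟩, ?_⟩
      refine (QuotientAddGroup.eq ..).mpr ?_
      have : -(p * b * p) + a = z := by rw [hab]; noncomm_ring
      rw [this]; exact hz
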